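/- arXiv:1206.1401 — 4 statements merged into one kernel-verified Lean document; each statement's English description precedes it below -/
import Mathlib

section
/- There is no finite set B of 4×4 complex rate matrices (elements of 𝔏_GM) with |B| = 7 or |B| = 11 such that B is linearly independent over ℂ and B is invariant as a set under the conjugation action of 𝒢, i.e. {K_σ Q K_σ⁻¹ : Q ∈ B} = B for every σ ∈ 𝒢. In particular, there are no Lie Markov models with purine/pyrimidine symmetry of dimension seven or eleven. -/
open Matrix

noncomputable section

/-- The elementary rate matrix `L_ij`: entry 1 at `(i,j)`, entry −1 at `(j,j)`, 0 elsewhere. -/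
def Lmat (i j : Fin 4) : Matrix (Fin 4) (Fin 4) ℂ :=
  Matrix.single i j 1 - Matrix.single j j 1

/-- `𝔏_GM`: the 4×4 complex matrices each of whose columns sums to zero. -/
def LGMset : Set (Matrix (Fin 4) (Fin 4) ℂ) :=
  {Q | ∀ j, ∑ i, Q i j = 0}

/-- The permutation matrix `K_σ`, with entry 1 in position `(σ j, j)` for each `j`. -/
def Kmat (σ : Equiv.Perm (Fin 4)) : Matrix (Fin 4) (Fin 4) ℂ :=
  Matrix.of fun i j => if i = σ j then 1 else 0

/-- The permutation vector `P_σ := K_σ − I`. -/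
def Pmat (σ : Equiv.Perm (Fin 4)) : Matrix (Fin 4) (Fin 4) ℂ :=
  Kmat σ - 1

/-- The 4-cycle (1324) (on `{1,2,3,4}`, i.e. `0 ↦ 2 ↦ 1 ↦ 3 ↦ 0` on `Fin 4`). -/
def c1324 : Equiv.Perm (Fin 4) := Equiv.swap 0 3 * Equiv.swap 0 1 * Equiv.swap 0 2

/-- The 4-cycle (1423) (on `{1,2,3,4}`, i.e. `0 ↦ 3 ↦ 1 ↦ 2 ↦ 0` on `Fin 4`). -/
def c1423 : Equiv.Perm (Fin 4) := Equiv.swap 0 2 * Equiv.swap 0 1 * Equiv.swap 0 3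

/-- The group 𝒢 = {e, (12), (34), (12)(34), (13)(24), (14)(23), (1324), (1423)},
presented as a list of its eight elements. -/
def Glist : List (Equiv.Perm (Fin 4)) :=
  [1, Equiv.swap 0 1, Equiv.swap 2 3, Equiv.swap 0 1 * Equiv.swap 2 3,
   Equiv.swap 0 2 * Equiv.swap 1 3, Equiv.swap 0 3 * Equiv.swap 1 2, c1324, c1423]

/-! ### Auxiliary lemmas -/

lemma Kone : Kmat 1 = 1 := by
  ext i j; simp [Kmat, Matrix.one_apply]; split_ifs <;> simp_all

lemma Kmul (σ τ : Equiv.Perm (Fin 4)) : Kmat σ * Kmat τ = Kmat (σ * τ) := by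
  ext i j
  simp only [Kmat, Matrix.mul_apply, Matrix.of_apply, mul_ite, mul_one, mul_zero, ite_mul,
    one_mul, zero_mul, Equiv.Perm.mul_apply]
  simp [Finset.sum_ite_eq]; split_ifs <;> simp_all

lemma Kinv (σ : Equiv.Perm (Fin 4)) : (Kmat σ)⁻¹ = Kmat σ⁻¹ := by
  apply Matrix.inv_eq_right_inv
  rw [Kmul, mul_inv_cancel, Kone]

lemma entry_rel {σ : Equiv.Perm (Fin 4)} {Q : Matrix (Fin 4) (Fin 4) ℂ}
    (h : Kmat σ * Q * (Kmat σ)⁻¹ = Q) (a b : Fin 4) : Q (σ a) (σ b) = Q a b := by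
  have h' : Kmat σ * Q = Q * Kmat σ := by
    rw [Kinv] at h
    calc Kmat σ * Q = (Kmat σ * Q * Kmat σ⁻¹) * Kmat σ := by
          rw [mul_assoc, Kmul, inv_mul_cancel, Kone, mul_one]
      _ = Q * Kmat σ := by rw [h]
  have e := congrFun (congrFun h' (σ a)) b
  simp only [Matrix.mul_apply, Kmat, Matrix.of_apply, ite_mul, one_mul, zero_mul,
    mul_ite, mul_one, mul_zero, EmbeddingLike.apply_eq_iff_eq] at e
  simp [Finset.sum_ite_eq, Finset.sum_ite_eq'] at e; exact e.symm

/-- First basic 𝒢-fixed matrix. -/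
def M1 : Matrix (Fin 4) (Fin 4) ℂ := !![-1,1,0,0; 1,-1,0,0; 0,0,-1,1; 0,0,1,-1]
/-- Second basic 𝒢-fixed matrix. -/
def M2 : Matrix (Fin 4) (Fin 4) ℂ := !![-2,0,1,1; 0,-2,1,1; 1,1,-2,0; 1,1,0,-2]

/-- Any matrix in `𝔏_GM` fixed by the conjugation action of the three generators of 𝒢
is a linear combination of `M1` and `M2`. -/
lemma fixed_dep {Q : Matrix (Fin 4) (Fin 4) ℂ} (hQ : Q ∈ LGMset)
    (h1 : Kmat (Equiv.swap 0 1) * Q * (Kmat (Equiv.swap 0 1))⁻¹ = Q)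
    (h2 : Kmat (Equiv.swap 2 3) * Q * (Kmat (Equiv.swap 2 3))⁻¹ = Q)
    (h3 : Kmat (Equiv.swap 0 2 * Equiv.swap 1 3) * Q *
      (Kmat (Equiv.swap 0 2 * Equiv.swap 1 3))⁻¹ = Q) :
    Q = Q 0 1 • M1 + Q 0 2 • M2 := by
  have r1 := entry_rel h1
  have r2 := entry_rel h2
  have r3 := entry_rel h3
  have c0 := hQ 0
  rw [Fin.sum_univ_four] at c0
  have e10 : Q 1 0 = Q 0 1 := by have := r1 0 1; simpa using this
  have e11 : Q 1 1 = Q 0 0 := by have := r1 0 0; simpa using this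
  have e23 : Q 2 3 = Q 0 1 := by have := r3 0 1; simpa [Equiv.swap_apply_def] using this
  have e32 : Q 3 2 = Q 1 0 := by have := r3 1 0; simpa [Equiv.swap_apply_def] using this
  have e22 : Q 2 2 = Q 0 0 := by have := r3 0 0; simpa [Equiv.swap_apply_def] using this
  have e33 : Q 3 3 = Q 1 1 := by have := r3 1 1; simpa [Equiv.swap_apply_def] using this
  have e12 : Q 1 2 = Q 0 2 := by have := r1 0 2; simpa [Equiv.swap_apply_def] using this
  have e03 : Q 0 3 = Q 0 2 := by have := r2 0 2; simpa [Equiv.swap_apply_def] using this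
  have e13 : Q 1 3 = Q 0 3 := by have := r1 0 3; simpa [Equiv.swap_apply_def] using this
  have e20 : Q 2 0 = Q 0 2 := by have := r3 0 2; simpa [Equiv.swap_apply_def] using this
  have e31 : Q 3 1 = Q 1 3 := by have := r3 1 3; simpa [Equiv.swap_apply_def] using this
  have e21 : Q 2 1 = Q 0 3 := by have := r3 0 3; simpa [Equiv.swap_apply_def] using this
  have e30 : Q 3 0 = Q 1 2 := by have := r3 1 2; simpa [Equiv.swap_apply_def] using this
  have e00 : Q 0 0 = -Q 0 1 - 2 * Q 0 2 := by
    rw [e10, e20, e30, e12] at c0; linear_combination c0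
  have f2 : (⟨2, by norm_num⟩ : Fin 4) = 2 := rfl
  have f3 : (⟨3, by norm_num⟩ : Fin 4) = 3 := rfl
  ext i j
  fin_cases i <;> fin_cases j <;>
    simp only [Fin.zero_eta, Fin.mk_one, f2, f3, Fin.isValue, Matrix.add_apply, Matrix.smul_apply,
      smul_eq_mul, M1, M2] <;>
    norm_num [Matrix.cons_val_zero, Matrix.cons_val_one, Matrix.head_cons, Matrix.cons_val_two,
      Matrix.cons_val_three, Matrix.vecHead, Matrix.vecTail, e10, e11, e23, e32, e22, e33, e12,
      e03, e13, e20, e31, e21, e30, e00] <;> ring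

/-- 𝒢 as a subgroup of `S₄`. -/
def G4 : Subgroup (Equiv.Perm (Fin 4)) where
  carrier := {σ | σ ∈ Glist}
  mul_mem' := by intro a b ha hb; revert a b ha hb; decide
  one_mem' := by decide
  inv_mem' := by intro a ha; revert a ha; decide

instance G4fin : Fintype ↥G4 :=
  Fintype.ofFinset Glist.toFinset (fun x => by rw [List.mem_toFinset]; exact Iff.rfl)

lemma G4card : Fintype.card G4 = 8 := by
  rw [Fintype.card_of_subtype Glist.toFinset (fun x => by rw [List.mem_toFinset]; exact Iff.rfl)]
  decide

lemma G4mem {σ : Equiv.Perm (Fin 4)} (h : σ ∈ Glist) : σ ∈ G4 := h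

/-- Three pairs of complex numbers are always linearly dependent. -/
lemma exists_dep (a b : Fin 3 → ℂ) :
    ∃ g : Fin 3 → ℂ, (∃ i, g i ≠ 0) ∧ ∑ i, g i * a i = 0 ∧ ∑ i, g i * b i = 0 := by
  have hni : ¬ LinearIndependent ℂ (fun i : Fin 3 => ![a i, b i]) := by
    intro h
    have := h.fintype_card_le_finrank
    rw [Module.finrank_fintype_fun_eq_card] at this
    simp [Fintype.card_fin] at this
  obtain ⟨g, hg, i, hi⟩ := Fintype.not_linearIndependent_iff.1 hni
  refine ⟨g, ⟨i, hi⟩, ?_, ?_⟩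
  · have := congrFun hg 0
    simpa [Finset.sum_apply, mul_comm] using this
  · have := congrFun hg 1
    simpa [Finset.sum_apply, mul_comm] using this

lemma dvd_eight (d : ℕ) (hd : d ∣ 8) : d = 1 ∨ d = 2 ∨ d = 4 ∨ d = 8 := by
  have hle : d ≤ 8 := Nat.le_of_dvd (by norm_num) hd
  interval_cases d <;> revert hd <;> decide

theorem no_seven_or_eleven_dimensional_G_invariant_model :
    ¬ ∃ B : Set (Matrix (Fin 4) (Fin 4) ℂ),
      B ⊆ LGMset ∧
      (B.ncard = 7 ∨ B.ncard = 11) ∧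
      LinearIndependent ℂ ((↑) : B → Matrix (Fin 4) (Fin 4) ℂ) ∧
      (∀ σ ∈ Glist, (fun Q => Kmat σ * Q * (Kmat σ)⁻¹) '' B = B) := by
  classical
  rintro ⟨B, hBL, hcard, hli, hinv⟩
  have hfin : B.Finite := by
    apply Set.finite_of_ncard_ne_zero
    rcases hcard with h | h <;> omega
  letI : Fintype ↥B := hfin.fintype
  -- the action of 𝒢 on B
  have hmem : ∀ (σ : Equiv.Perm (Fin 4)), σ ∈ Glist → ∀ x ∈ B,
      Kmat σ * x * (Kmat σ)⁻¹ ∈ B := by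
    intro σ hσ x hx
    have := hinv σ hσ
    rw [← this]
    exact ⟨x, hx, rfl⟩
  letI act : MulAction G4 ↥B :=
    { smul := fun σ x => ⟨Kmat ↑σ * ↑x * (Kmat ↑σ)⁻¹, hmem σ σ.2 x x.2⟩
      one_smul := fun x => Subtype.ext (by
        show Kmat ↑(1 : G4) * (x : Matrix (Fin 4) (Fin 4) ℂ) * (Kmat ↑(1 : G4))⁻¹ = ↑x
        simp [Kone])
      mul_smul := fun σ τ x => Subtype.ext (by
        show Kmat ↑(σ * τ) * (x : Matrix (Fin 4) (Fin 4) ℂ) * (Kmat ↑(σ * τ))⁻¹ =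
          Kmat ↑σ * (Kmat ↑τ * (x : Matrix (Fin 4) (Fin 4) ℂ) * (Kmat ↑τ)⁻¹) * (Kmat ↑σ)⁻¹
        have h1 : (Kmat ↑(σ * τ))⁻¹ = Kmat (↑τ)⁻¹ * Kmat (↑σ)⁻¹ := by
          rw [Kinv, Subgroup.coe_mul, _root_.mul_inv_rev, ← Kmul]
        rw [h1, Subgroup.coe_mul, ← Kmul, Kinv, Kinv]
        simp only [mul_assoc]) }
  have smul_coe : ∀ (σ : G4) (x : ↥B),
      ((σ • x : ↥B) : Matrix (Fin 4) (Fin 4) ℂ) =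
        Kmat ↑σ * (x : Matrix (Fin 4) (Fin 4) ℂ) * (Kmat ↑σ)⁻¹ := fun _ _ => rfl
  -- orbit machinery
  letI : Fintype (MulAction.orbitRel.Quotient G4 ↥B) := Fintype.ofFinite _
  set Ω := MulAction.orbitRel.Quotient G4 ↥B with hΩdef
  -- the sum of the elements of an orbit
  set v : Ω → Matrix (Fin 4) (Fin 4) ℂ :=
    fun ω => ∑ x ∈ (Set.toFinite ω.orbit).toFinset, (x : Matrix (Fin 4) (Fin 4) ℂ) with hvdef
  -- orbit sums lie in LGMset
  have hvL : ∀ ω : Ω, v ω ∈ LGMset := by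
    intro ω j
    rw [hvdef]
    simp only [Matrix.sum_apply]
    rw [Finset.sum_comm]
    have : ∀ x ∈ (Set.toFinite ω.orbit).toFinset,
        ∑ i, ((x : ↥B) : Matrix (Fin 4) (Fin 4) ℂ) i j = 0 := by
      intro x _
      exact hBL x.2 j
    rw [Finset.sum_congr rfl this]
    simp
  -- orbit sums are fixed by conjugation
  have hvfix : ∀ (ω : Ω) (σ : Equiv.Perm (Fin 4)) (hσ : σ ∈ Glist),
      Kmat σ * v ω * (Kmat σ)⁻¹ = v ω := by
    intro ω σ hσ
    have hσ' : σ ∈ G4 := hσ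
    set σ' : G4 := ⟨σ, hσ'⟩ with hσ'def
    rw [hvdef]
    rw [Finset.mul_sum, Finset.sum_mul]
    refine Finset.sum_equiv (MulAction.toPerm σ') ?_ ?_
    · intro x
      simp only [Set.Finite.mem_toFinset, MulAction.toPerm_apply]
      constructor
      · intro hx
        exact MulAction.orbitRel.Quotient.mapsTo_smul_orbit σ' ω hx
      · intro hx
        have := MulAction.orbitRel.Quotient.mapsTo_smul_orbit σ'⁻¹ ω hx
        simpa using this
    · intro x _
      rw [MulAction.toPerm_apply, smul_coe]
  -- distinct orbits are disjoint
  have hdisj : ∀ (ω1 ω2 : Ω), ω1 ≠ ω2 → ∀ x : ↥B, x ∈ ω1.orbit → x ∈ ω2.orbit → False := by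
    intro ω1 ω2 hne x h1 h2
    rw [MulAction.orbitRel.Quotient.mem_orbit] at h1 h2
    exact hne (h1 ▸ h2 ▸ rfl)
  -- there cannot be three distinct orbits
  have h3orb : ∀ ω1 ω2 ω3 : Ω, ω1 ≠ ω2 → ω1 ≠ ω3 → ω2 ≠ ω3 → False := by
    intro ω1 ω2 ω3 h12 h13 h23
    set w : Fin 3 → Ω := ![ω1, ω2, ω3] with hwdef
    have hg1 : Equiv.swap 0 1 ∈ Glist := by decide
    have hg2 : Equiv.swap 2 3 ∈ Glist := by decide
    have hg3 : Equiv.swap 0 2 * Equiv.swap 1 3 ∈ Glist := by decide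
    have hv : ∀ i : Fin 3, v (w i) = (v (w i)) 0 1 • M1 + (v (w i)) 0 2 • M2 := by
      intro i
      exact fixed_dep (hvL (w i)) (hvfix (w i) _ hg1) (hvfix (w i) _ hg2) (hvfix (w i) _ hg3)
    obtain ⟨g, ⟨k, hk⟩, ha, hb⟩ := exists_dep (fun i => v (w i) 0 1) (fun i => v (w i) 0 2)
    have hsum : ∑ i : Fin 3, g i • v (w i) = 0 := by
      calc ∑ i : Fin 3, g i • v (w i)
          = ∑ i : Fin 3, ((g i * v (w i) 0 1) • M1 + (g i * v (w i) 0 2) • M2) := by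
            refine Finset.sum_congr rfl fun i _ => ?_
            calc g i • v (w i)
                = g i • (v (w i) 0 1 • M1 + v (w i) 0 2 • M2) := congrArg _ (hv i)
              _ = (g i * v (w i) 0 1) • M1 + (g i * v (w i) 0 2) • M2 := by
                  rw [smul_add, smul_smul, smul_smul]
        _ = (∑ i : Fin 3, g i * v (w i) 0 1) • M1 + (∑ i : Fin 3, g i * v (w i) 0 2) • M2 := by
            rw [Finset.sum_add_distrib, ← Finset.sum_smul, ← Finset.sum_smul]
        _ = 0 := by rw [ha, hb]; simp
    rw [Fin.sum_univ_three] at hsum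
    have hw0 : w 0 = ω1 := rfl
    have hw1 : w 1 = ω2 := rfl
    have hw2 : w 2 = ω3 := rfl
    rw [hw0, hw1, hw2] at hsum
    -- build the dependence relation on B
    set t1 := (Set.toFinite ω1.orbit).toFinset with ht1
    set t2 := (Set.toFinite ω2.orbit).toFinset with ht2
    set t3 := (Set.toFinite ω3.orbit).toFinset with ht3
    have hd12 : Disjoint t1 t2 := by
      rw [Finset.disjoint_left]
      intro x hx1 hx2
      rw [ht1, Set.Finite.mem_toFinset] at hx1
      rw [ht2, Set.Finite.mem_toFinset] at hx2
      exact hdisj ω1 ω2 h12 x hx1 hx2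
    have hd13 : Disjoint t1 t3 := by
      rw [Finset.disjoint_left]
      intro x hx1 hx2
      rw [ht1, Set.Finite.mem_toFinset] at hx1
      rw [ht3, Set.Finite.mem_toFinset] at hx2
      exact hdisj ω1 ω3 h13 x hx1 hx2
    have hd23 : Disjoint t2 t3 := by
      rw [Finset.disjoint_left]
      intro x hx1 hx2
      rw [ht2, Set.Finite.mem_toFinset] at hx1
      rw [ht3, Set.Finite.mem_toFinset] at hx2
      exact hdisj ω2 ω3 h23 x hx1 hx2
    set c : ↥B → ℂ := fun x =>
      if x ∈ ω1.orbit then g 0 else if x ∈ ω2.orbit then g 1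
        else if x ∈ ω3.orbit then g 2 else 0 with hcdef
    have hc1 : ∀ x ∈ t1, c x = g 0 := by
      intro x hx
      rw [ht1, Set.Finite.mem_toFinset] at hx
      simp [hcdef, hx]
    have hc2 : ∀ x ∈ t2, c x = g 1 := by
      intro x hx
      rw [ht2, Set.Finite.mem_toFinset] at hx
      have hx1 : x ∉ ω1.orbit := fun h => hdisj ω1 ω2 h12 x h hx
      simp [hcdef, hx, hx1]
    have hc3 : ∀ x ∈ t3, c x = g 2 := by
      intro x hx
      rw [ht3, Set.Finite.mem_toFinset] at hx
      have hx1 : x ∉ ω1.orbit := fun h => hdisj ω1 ω3 h13 x h hx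
      have hx2 : x ∉ ω2.orbit := fun h => hdisj ω2 ω3 h23 x h hx
      simp [hcdef, hx, hx1, hx2]
    have hcsum : ∑ x : ↥B, c x • (x : Matrix (Fin 4) (Fin 4) ℂ) = 0 := by
      have hU : ∑ x ∈ t1 ∪ t2 ∪ t3, c x • (x : Matrix (Fin 4) (Fin 4) ℂ)
          = ∑ x : ↥B, c x • (x : Matrix (Fin 4) (Fin 4) ℂ) := by
        refine Finset.sum_subset (Finset.subset_univ _) ?_
        intro x _ hx
        simp only [Finset.mem_union, not_or] at hx
        obtain ⟨⟨hx1, hx2⟩, hx3⟩ := hx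
        rw [ht1, Set.Finite.mem_toFinset] at hx1
        rw [ht2, Set.Finite.mem_toFinset] at hx2
        rw [ht3, Set.Finite.mem_toFinset] at hx3
        simp [hcdef, hx1, hx2, hx3]
      rw [← hU]
      rw [Finset.sum_union (by exact Finset.disjoint_union_left.2 ⟨hd13, hd23⟩),
        Finset.sum_union hd12]
      have e1 : ∑ x ∈ t1, c x • (x : Matrix (Fin 4) (Fin 4) ℂ) = g 0 • v ω1 := by
        rw [Finset.sum_congr rfl (fun x hx => by rw [hc1 x hx]), ← Finset.smul_sum]
      have e2 : ∑ x ∈ t2, c x • (x : Matrix (Fin 4) (Fin 4) ℂ) = g 1 • v ω2 := by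
        rw [Finset.sum_congr rfl (fun x hx => by rw [hc2 x hx]), ← Finset.smul_sum]
      have e3 : ∑ x ∈ t3, c x • (x : Matrix (Fin 4) (Fin 4) ℂ) = g 2 • v ω3 := by
        rw [Finset.sum_congr rfl (fun x hx => by rw [hc3 x hx]), ← Finset.smul_sum]
      rw [e1, e2, e3]
      exact hsum
    have hzero := Fintype.linearIndependent_iff.1 hli c hcsum
    -- get an element of the k-th orbit
    have hne : ∀ ω : Ω, (MulAction.orbitRel.Quotient.orbit ω).Nonempty :=
      fun ω => MulAction.orbitRel.Quotient.nonempty_orbit ω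
    fin_cases k
    · obtain ⟨x, hx⟩ := hne ω1
      have := hzero x
      rw [hcdef] at this
      simp only [hx, if_true] at this
      exact hk this
    · obtain ⟨x, hx⟩ := hne ω2
      have := hzero x
      have hx1 : x ∉ ω1.orbit := fun h => hdisj ω1 ω2 h12 x h hx
      rw [hcdef] at this
      simp only [hx, hx1, if_true, if_false] at this
      exact hk this
    · obtain ⟨x, hx⟩ := hne ω3
      have := hzero x
      have hx1 : x ∉ ω1.orbit := fun h => hdisj ω1 ω3 h13 x h hx
      have hx2 : x ∉ ω2.orbit := fun h => hdisj ω2 ω3 h23 x h hx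
      rw [hcdef] at this
      simp only [hx, hx1, hx2, if_true, if_false] at this
      exact hk this
  -- hence there are at most two orbits
  have hcΩ : Fintype.card Ω ≤ 2 := by
    by_contra h
    push_neg at h
    obtain ⟨a, b, cc, hab, hac, hbc⟩ := Fintype.two_lt_card_iff.1 h
    exact h3orb a b cc hab hac hbc
  -- orbit sizes divide 8
  letI : ∀ ω : Ω, Fintype ↥(MulAction.orbit G4 (Quotient.out ω)) := fun ω => Fintype.ofFinite _
  have hdvd : ∀ ω : Ω, Fintype.card ↥(MulAction.orbit G4 (Quotient.out ω)) ∣ 8 := by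
    intro ω
    letI : Fintype ↥(MulAction.stabilizer G4 (Quotient.out ω)) := Fintype.ofFinite _
    have h := MulAction.card_orbit_mul_card_stabilizer_eq_card_group G4 (Quotient.out ω)
    rw [G4card] at h
    exact ⟨_, h.symm⟩
  -- cardinality decomposition
  have hBcard : B.ncard = ∑ ω : Ω, Fintype.card ↥(MulAction.orbit G4 (Quotient.out ω)) := by
    rw [Set.ncard_eq_toFinset_card', Set.toFinset_card]
    rw [Fintype.card_congr (MulAction.selfEquivSigmaOrbits G4 ↥B)]
    rw [Fintype.card_sigma]
  -- final arithmetic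
  have key : ∀ s : Finset Ω, s.card ≤ 2 →
      ∑ ω ∈ s, Fintype.card ↥(MulAction.orbit G4 (Quotient.out ω)) ≠ 7 ∧
      ∑ ω ∈ s, Fintype.card ↥(MulAction.orbit G4 (Quotient.out ω)) ≠ 11 := by
    intro s hs
    obtain h0 | h1 | h2 : s.card = 0 ∨ s.card = 1 ∨ s.card = 2 := by omega
    · rw [Finset.card_eq_zero] at h0
      subst h0
      simp
    · obtain ⟨a, rfl⟩ := Finset.card_eq_one.1 h1
      rw [Finset.sum_singleton]
      have ha := dvd_eight _ (hdvd a)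
      omega
    · obtain ⟨a, b, hab, rfl⟩ := Finset.card_eq_two.1 h2
      rw [Finset.sum_pair hab]
      have ha := dvd_eight _ (hdvd a)
      have hb := dvd_eight _ (hdvd b)
      omega
  have hkey := key Finset.univ (by rw [Finset.card_univ]; exact hcΩ)
  rcases hcard with h7 | h7 <;> rw [hBcard] at h7
  · exact hkey.1 h7
  · exact hkey.2 h7
end
end

section
/- The twelve 4×4 matrices B^id₁, B^id₂, B^sgn, B^ζ1, B^ζ2₁, B^ζ2₂, B^ξ₁, B^ξ₂, B^ξ₃, B^ξ₄, B^ξ₅, B^ξ₆ are linearly independent over ℂ and span 𝔏_GM; that is, they form a ℂ-basis of the 12-dimensional space of 4×4 complex matrices with zero column sums. -/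
open Matrix

noncomputable section

/-- `𝔏_GM` as a complex submodule of the 4×4 matrices. -/
def LGMsub : Submodule ℂ (Matrix (Fin 4) (Fin 4) ℂ) where
  carrier := LGMset
  add_mem' := by
    intro a b ha hb
    intro j
    simp only [Matrix.add_apply, Finset.sum_add_distrib, ha j, hb j, add_zero]
  zero_mem' := by intro j; simp
  smul_mem' := by
    intro c a ha
    intro j
    simp only [Matrix.smul_apply, smul_eq_mul, ← Finset.mul_sum, ha j, mul_zero]

/-- Row-sum vectors `R_i = ∑_{j ≠ i} L_ij`. -/
def Rvec (i : Fin 4) : Matrix (Fin 4) (Fin 4) ℂ :=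
  ∑ j ∈ Finset.univ.filter (· ≠ i), Lmat i j

/-- The cherry vector `Q₁₂ = L₁₃ + L₁₄ + L₂₃ + L₂₄` (1-based indices). -/
def Qc12 : Matrix (Fin 4) (Fin 4) ℂ := Lmat 0 2 + Lmat 0 3 + Lmat 1 2 + Lmat 1 3

/-- The cherry vector `Q₃₄ = L₃₁ + L₃₂ + L₄₁ + L₄₂` (1-based indices). -/
def Qc34 : Matrix (Fin 4) (Fin 4) ℂ := Lmat 2 0 + Lmat 2 1 + Lmat 3 0 + Lmat 3 1

/-- Twisted vectors `H_i = L_ik + L_il + L_ji` (1-based: H₁ = L₁₃+L₁₄+L₂₁, etc.). -/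
def Hvec : Fin 4 → Matrix (Fin 4) (Fin 4) ℂ
  | 0 => Lmat 0 2 + Lmat 0 3 + Lmat 1 0
  | 1 => Lmat 1 2 + Lmat 1 3 + Lmat 0 1
  | 2 => Lmat 2 0 + Lmat 2 1 + Lmat 3 2
  | 3 => Lmat 3 0 + Lmat 3 1 + Lmat 2 3

/-- Twisted vectors `V_i = L_ki + L_li + L_ij` (1-based: V₁ = L₃₁+L₄₁+L₁₂, etc.). -/
def Vvec : Fin 4 → Matrix (Fin 4) (Fin 4) ℂ
  | 0 => Lmat 2 0 + Lmat 3 0 + Lmat 0 1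
  | 1 => Lmat 2 1 + Lmat 3 1 + Lmat 1 0
  | 2 => Lmat 0 2 + Lmat 1 2 + Lmat 2 3
  | 3 => Lmat 0 3 + Lmat 1 3 + Lmat 3 2

def Bid1 : Matrix (Fin 4) (Fin 4) ℂ := Pmat (Equiv.swap 0 1 * Equiv.swap 2 3)
def Bid2 : Matrix (Fin 4) (Fin 4) ℂ :=
  Pmat (Equiv.swap 0 2 * Equiv.swap 1 3) + Pmat (Equiv.swap 0 3 * Equiv.swap 1 2)
def Bsgn : Matrix (Fin 4) (Fin 4) ℂ :=
  Pmat (Equiv.swap 0 2 * Equiv.swap 1 3) - Pmat (Equiv.swap 0 3 * Equiv.swap 1 2)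
def Bzeta1 : Matrix (Fin 4) (Fin 4) ℂ := Pmat c1324 - Pmat c1423
def Bzeta2_1 : Matrix (Fin 4) (Fin 4) ℂ := Pmat (Equiv.swap 0 1) - Pmat (Equiv.swap 2 3)
def Bzeta2_2 : Matrix (Fin 4) (Fin 4) ℂ := Qc12 - Qc34
def Bxi1 : Matrix (Fin 4) (Fin 4) ℂ := Rvec 0 - Rvec 1
def Bxi2 : Matrix (Fin 4) (Fin 4) ℂ := Rvec 2 - Rvec 3
def Bxi3 : Matrix (Fin 4) (Fin 4) ℂ := Hvec 0 - Hvec 1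
def Bxi4 : Matrix (Fin 4) (Fin 4) ℂ := Hvec 2 - Hvec 3
def Bxi5 : Matrix (Fin 4) (Fin 4) ℂ := Vvec 0 - Vvec 1
def Bxi6 : Matrix (Fin 4) (Fin 4) ℂ := Vvec 2 - Vvec 3


lemma Lapp (i j a b : Fin 4) :
    Lmat i j a b = (if i = a ∧ j = b then (1:ℂ) else 0) - (if j = a ∧ j = b then 1 else 0) := by
  simp only [Lmat, Matrix.sub_apply, Matrix.single, Matrix.of_apply]

lemma hc1324 : ∀ j : Fin 4, c1324 j = ![2, 3, 1, 0] j := by decide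

lemma hc1423 : ∀ j : Fin 4, c1423 j = ![3, 2, 0, 1] j := by decide


lemma hR0 : Rvec 0 = Lmat 0 1 + Lmat 0 2 + Lmat 0 3 := by
  rw [Rvec, show Finset.univ.filter (· ≠ (0:Fin 4)) = {1, 2, 3} by decide]
  simp [Finset.sum_insert, add_assoc]

lemma hR1 : Rvec 1 = Lmat 1 0 + Lmat 1 2 + Lmat 1 3 := by
  rw [Rvec, show Finset.univ.filter (· ≠ (1:Fin 4)) = {0, 2, 3} by decide]
  simp [Finset.sum_insert, add_assoc]

lemma hR2 : Rvec 2 = Lmat 2 0 + Lmat 2 1 + Lmat 2 3 := by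
  rw [Rvec, show Finset.univ.filter (· ≠ (2:Fin 4)) = {0, 1, 3} by decide]
  simp [Finset.sum_insert, add_assoc]

lemma hR3 : Rvec 3 = Lmat 3 0 + Lmat 3 1 + Lmat 3 2 := by
  rw [Rvec, show Finset.univ.filter (· ≠ (3:Fin 4)) = {0, 1, 2} by decide]
  simp [Finset.sum_insert, add_assoc]

lemma hBid1 : Bid1 = !![-1, 1, 0, 0; 1, -1, 0, 0; 0, 0, -1, 1; 0, 0, 1, -1] := by
  ext i j
  fin_cases i <;> fin_cases j <;>
    simp [Bid1, Equiv.Perm.mul_apply, Equiv.swap_apply_def, Pmat, Kmat, Qc12, Qc34, Hvec, Vvec, hR0, hR1, hR2, hR3, Lapp, Matrix.one_apply, Matrix.add_apply, Matrix.sub_apply, Matrix.vecHead, Matrix.vecTail] <;> norm_num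

lemma hBid2 : Bid2 = !![-2, 0, 1, 1; 0, -2, 1, 1; 1, 1, -2, 0; 1, 1, 0, -2] := by
  ext i j
  fin_cases i <;> fin_cases j <;>
    simp [Bid2, Equiv.Perm.mul_apply, Equiv.swap_apply_def, Pmat, Kmat, Qc12, Qc34, Hvec, Vvec, hR0, hR1, hR2, hR3, Lapp, Matrix.one_apply, Matrix.add_apply, Matrix.sub_apply, Matrix.vecHead, Matrix.vecTail] <;> norm_num

lemma hBsgn : Bsgn = !![0, 0, 1, -1; 0, 0, -1, 1; 1, -1, 0, 0; -1, 1, 0, 0] := by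
  ext i j
  fin_cases i <;> fin_cases j <;>
    simp [Bsgn, Equiv.Perm.mul_apply, Equiv.swap_apply_def, Pmat, Kmat, Qc12, Qc34, Hvec, Vvec, hR0, hR1, hR2, hR3, Lapp, Matrix.one_apply, Matrix.add_apply, Matrix.sub_apply, Matrix.vecHead, Matrix.vecTail] <;> norm_num

lemma hBzeta1 : Bzeta1 = !![0, 0, -1, 1; 0, 0, 1, -1; 1, -1, 0, 0; -1, 1, 0, 0] := by
  ext i j
  fin_cases i <;> fin_cases j <;>
    simp [Bzeta1, hc1324, hc1423, Pmat, Kmat, Qc12, Qc34, Hvec, Vvec, hR0, hR1, hR2, hR3, Lapp, Matrix.one_apply, Matrix.add_apply, Matrix.sub_apply, Matrix.vecHead, Matrix.vecTail] <;> norm_num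

lemma hBzeta2_1 : Bzeta2_1 = !![-1, 1, 0, 0; 1, -1, 0, 0; 0, 0, 1, -1; 0, 0, -1, 1] := by
  ext i j
  fin_cases i <;> fin_cases j <;>
    simp [Bzeta2_1, Equiv.Perm.mul_apply, Equiv.swap_apply_def, Pmat, Kmat, Qc12, Qc34, Hvec, Vvec, hR0, hR1, hR2, hR3, Lapp, Matrix.one_apply, Matrix.add_apply, Matrix.sub_apply, Matrix.vecHead, Matrix.vecTail] <;> norm_num

lemma hBzeta2_2 : Bzeta2_2 = !![2, 0, 1, 1; 0, 2, 1, 1; -1, -1, -2, 0; -1, -1, 0, -2] := by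
  ext i j
  fin_cases i <;> fin_cases j <;>
    simp [Bzeta2_2, Equiv.Perm.mul_apply, Equiv.swap_apply_def, Pmat, Kmat, Qc12, Qc34, Hvec, Vvec, hR0, hR1, hR2, hR3, Lapp, Matrix.one_apply, Matrix.add_apply, Matrix.sub_apply, Matrix.vecHead, Matrix.vecTail] <;> norm_num

lemma hBxi1 : Bxi1 = !![1, 1, 1, 1; -1, -1, -1, -1; 0, 0, 0, 0; 0, 0, 0, 0] := by
  ext i j
  fin_cases i <;> fin_cases j <;>
    simp [Bxi1, Equiv.Perm.mul_apply, Equiv.swap_apply_def, Pmat, Kmat, Qc12, Qc34, Hvec, Vvec, hR0, hR1, hR2, hR3, Lapp, Matrix.one_apply, Matrix.add_apply, Matrix.sub_apply, Matrix.vecHead, Matrix.vecTail] <;> norm_num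

lemma hBxi2 : Bxi2 = !![0, 0, 0, 0; 0, 0, 0, 0; 1, 1, 1, 1; -1, -1, -1, -1] := by
  ext i j
  fin_cases i <;> fin_cases j <;>
    simp [Bxi2, Equiv.Perm.mul_apply, Equiv.swap_apply_def, Pmat, Kmat, Qc12, Qc34, Hvec, Vvec, hR0, hR1, hR2, hR3, Lapp, Matrix.one_apply, Matrix.add_apply, Matrix.sub_apply, Matrix.vecHead, Matrix.vecTail] <;> norm_num

lemma hBxi3 : Bxi3 = !![-1, -1, 1, 1; 1, 1, -1, -1; 0, 0, 0, 0; 0, 0, 0, 0] := by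
  ext i j
  fin_cases i <;> fin_cases j <;>
    simp [Bxi3, Equiv.Perm.mul_apply, Equiv.swap_apply_def, Pmat, Kmat, Qc12, Qc34, Hvec, Vvec, hR0, hR1, hR2, hR3, Lapp, Matrix.one_apply, Matrix.add_apply, Matrix.sub_apply, Matrix.vecHead, Matrix.vecTail] <;> norm_num

lemma hBxi4 : Bxi4 = !![0, 0, 0, 0; 0, 0, 0, 0; 1, 1, -1, -1; -1, -1, 1, 1] := by
  ext i j
  fin_cases i <;> fin_cases j <;>
    simp [Bxi4, Equiv.Perm.mul_apply, Equiv.swap_apply_def, Pmat, Kmat, Qc12, Qc34, Hvec, Vvec, hR0, hR1, hR2, hR3, Lapp, Matrix.one_apply, Matrix.add_apply, Matrix.sub_apply, Matrix.vecHead, Matrix.vecTail] <;> norm_num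

lemma hBxi5 : Bxi5 = !![-1, 1, 0, 0; -1, 1, 0, 0; 1, -1, 0, 0; 1, -1, 0, 0] := by
  ext i j
  fin_cases i <;> fin_cases j <;>
    simp [Bxi5, Equiv.Perm.mul_apply, Equiv.swap_apply_def, Pmat, Kmat, Qc12, Qc34, Hvec, Vvec, hR0, hR1, hR2, hR3, Lapp, Matrix.one_apply, Matrix.add_apply, Matrix.sub_apply, Matrix.vecHead, Matrix.vecTail] <;> norm_num

lemma hBxi6 : Bxi6 = !![0, 0, 1, -1; 0, 0, 1, -1; 0, 0, -1, 1; 0, 0, -1, 1] := by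
  ext i j
  fin_cases i <;> fin_cases j <;>
    simp [Bxi6, Equiv.Perm.mul_apply, Equiv.swap_apply_def, Pmat, Kmat, Qc12, Qc34, Hvec, Vvec, hR0, hR1, hR2, hR3, Lapp, Matrix.one_apply, Matrix.add_apply, Matrix.sub_apply, Matrix.vecHead, Matrix.vecTail] <;> norm_num



lemma sum12 {β : Type*} [AddCommMonoid β] (f : Fin 12 → β) :
    ∑ i, f i = f 0 + f 1 + f 2 + f 3 + f 4 + f 5 + f 6 + f 7 + f 8 + f 9 + f 10 + f 11 := by
  rw [Fin.sum_univ_castSucc, Fin.sum_univ_castSucc, Fin.sum_univ_castSucc,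
    Fin.sum_univ_castSucc, Fin.sum_univ_eight]
  rfl

lemma Bid1_mem : Bid1 ∈ LGMsub := by
  intro j
  rw [hBid1]
  fin_cases j <;> rw [Fin.sum_univ_four] <;> norm_num [Matrix.vecHead, Matrix.vecTail, Matrix.cons_val_two, Matrix.cons_val_three]

lemma Bid2_mem : Bid2 ∈ LGMsub := by
  intro j
  rw [hBid2]
  fin_cases j <;> rw [Fin.sum_univ_four] <;> norm_num [Matrix.vecHead, Matrix.vecTail, Matrix.cons_val_two, Matrix.cons_val_three]

lemma Bsgn_mem : Bsgn ∈ LGMsub := by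
  intro j
  rw [hBsgn]
  fin_cases j <;> rw [Fin.sum_univ_four] <;> norm_num [Matrix.vecHead, Matrix.vecTail, Matrix.cons_val_two, Matrix.cons_val_three]

lemma Bzeta1_mem : Bzeta1 ∈ LGMsub := by
  intro j
  rw [hBzeta1]
  fin_cases j <;> rw [Fin.sum_univ_four] <;> norm_num [Matrix.vecHead, Matrix.vecTail, Matrix.cons_val_two, Matrix.cons_val_three]

lemma Bzeta2_1_mem : Bzeta2_1 ∈ LGMsub := by
  intro j
  rw [hBzeta2_1]
  fin_cases j <;> rw [Fin.sum_univ_four] <;> norm_num [Matrix.vecHead, Matrix.vecTail, Matrix.cons_val_two, Matrix.cons_val_three]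

lemma Bzeta2_2_mem : Bzeta2_2 ∈ LGMsub := by
  intro j
  rw [hBzeta2_2]
  fin_cases j <;> rw [Fin.sum_univ_four] <;> norm_num [Matrix.vecHead, Matrix.vecTail, Matrix.cons_val_two, Matrix.cons_val_three]

lemma Bxi1_mem : Bxi1 ∈ LGMsub := by
  intro j
  rw [hBxi1]
  fin_cases j <;> rw [Fin.sum_univ_four] <;> norm_num [Matrix.vecHead, Matrix.vecTail, Matrix.cons_val_two, Matrix.cons_val_three]

lemma Bxi2_mem : Bxi2 ∈ LGMsub := by
  intro j
  rw [hBxi2]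
  fin_cases j <;> rw [Fin.sum_univ_four] <;> norm_num [Matrix.vecHead, Matrix.vecTail, Matrix.cons_val_two, Matrix.cons_val_three]

lemma Bxi3_mem : Bxi3 ∈ LGMsub := by
  intro j
  rw [hBxi3]
  fin_cases j <;> rw [Fin.sum_univ_four] <;> norm_num [Matrix.vecHead, Matrix.vecTail, Matrix.cons_val_two, Matrix.cons_val_three]

lemma Bxi4_mem : Bxi4 ∈ LGMsub := by
  intro j
  rw [hBxi4]
  fin_cases j <;> rw [Fin.sum_univ_four] <;> norm_num [Matrix.vecHead, Matrix.vecTail, Matrix.cons_val_two, Matrix.cons_val_three]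

lemma Bxi5_mem : Bxi5 ∈ LGMsub := by
  intro j
  rw [hBxi5]
  fin_cases j <;> rw [Fin.sum_univ_four] <;> norm_num [Matrix.vecHead, Matrix.vecTail, Matrix.cons_val_two, Matrix.cons_val_three]

lemma Bxi6_mem : Bxi6 ∈ LGMsub := by
  intro j
  rw [hBxi6]
  fin_cases j <;> rw [Fin.sum_univ_four] <;> norm_num [Matrix.vecHead, Matrix.vecTail, Matrix.cons_val_two, Matrix.cons_val_three]

set_option maxHeartbeats 1000000 in
lemma indep : LinearIndependent ℂ
    ![Bid1, Bid2, Bsgn, Bzeta1, Bzeta2_1, Bzeta2_2, Bxi1, Bxi2, Bxi3, Bxi4, Bxi5, Bxi6] := by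
  rw [Fintype.linearIndependent_iff]
  intro g h
  simp only [hBid1, hBid2, hBsgn, hBzeta1, hBzeta2_1, hBzeta2_2, hBxi1, hBxi2, hBxi3, hBxi4, hBxi5, hBxi6] at h
  rw [sum12] at h
  rw [show (![!![-1, 1, 0, 0; 1, -1, 0, 0; 0, 0, -1, 1; 0, 0, 1, -1], !![-2, 0, 1, 1; 0, -2, 1, 1; 1, 1, -2, 0; 1, 1, 0, -2], !![0, 0, 1, -1; 0, 0, -1, 1; 1, -1, 0, 0; -1, 1, 0, 0], !![0, 0, -1, 1; 0, 0, 1, -1; 1, -1, 0, 0; -1, 1, 0, 0], !![-1, 1, 0, 0; 1, -1, 0, 0; 0, 0, 1, -1; 0, 0, -1, 1], !![2, 0, 1, 1; 0, 2, 1, 1; -1, -1, -2, 0; -1, -1, 0, -2], !![1, 1, 1, 1; -1, -1, -1, -1; 0, 0, 0, 0; 0, 0, 0, 0], !![0, 0, 0, 0; 0, 0, 0, 0; 1, 1, 1, 1; -1, -1, -1, -1], !![-1, -1, 1, 1; 1, 1, -1, -1; 0, 0, 0, 0; 0, 0, 0, 0], !![0, 0, 0, 0; 0, 0, 0, 0;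 1, 1, -1, -1; -1, -1, 1, 1], !![-1, 1, 0, 0; -1, 1, 0, 0; 1, -1, 0, 0; 1, -1, 0, 0], !![0, 0, 1, -1; 0, 0, 1, -1; 0, 0, -1, 1; 0, 0, -1, 1]] : Fin 12 → Matrix (Fin 4) (Fin 4) ℂ) 0 = !![-1, 1, 0, 0; 1, -1, 0, 0; 0, 0, -1, 1; 0, 0, 1, -1] from rfl] at h
  rw [show (![!![-1, 1, 0, 0; 1, -1, 0, 0; 0, 0, -1, 1; 0, 0, 1, -1], !![-2, 0, 1, 1; 0, -2, 1, 1; 1, 1, -2, 0; 1, 1, 0, -2], !![0, 0, 1, -1; 0, 0, -1, 1; 1, -1, 0, 0; -1, 1, 0, 0], !![0, 0, -1, 1; 0, 0, 1, -1; 1, -1, 0, 0; -1, 1, 0, 0], !![-1, 1, 0, 0; 1, -1, 0, 0; 0, 0, 1, -1; 0, 0, -1, 1], !![2, 0, 1, 1; 0, 2, 1, 1; -1, -1, -2, 0; -1, -1, 0, -2], !![1, 1, 1, 1; -1, -1, -1, -1; 0, 0, 0, 0; 0, 0, 0, 0], !![0, 0, 0, 0; 0, 0, 0, 0; 1, 1,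 1, 1; -1, -1, -1, -1], !![-1, -1, 1, 1; 1, 1, -1, -1; 0, 0, 0, 0; 0, 0, 0, 0], !![0, 0, 0, 0; 0, 0, 0, 0; 1, 1, -1, -1; -1, -1, 1, 1], !![-1, 1, 0, 0; -1, 1, 0, 0; 1, -1, 0, 0; 1, -1, 0, 0], !![0, 0, 1, -1; 0, 0, 1, -1; 0, 0, -1, 1; 0, 0, -1, 1]] : Fin 12 → Matrix (Fin 4) (Fin 4) ℂ) 1 = !![-2, 0, 1, 1; 0, -2, 1, 1; 1, 1, -2, 0; 1, 1, 0, -2] from rfl] at h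
  rw [show (![!![-1, 1, 0, 0; 1, -1, 0, 0; 0, 0, -1, 1; 0, 0, 1, -1], !![-2, 0, 1, 1; 0, -2, 1, 1; 1, 1, -2, 0; 1, 1, 0, -2], !![0, 0, 1, -1; 0, 0, -1, 1; 1, -1, 0, 0; -1, 1, 0, 0], !![0, 0, -1, 1; 0, 0, 1, -1; 1, -1, 0, 0; -1, 1, 0, 0], !![-1, 1, 0, 0; 1, -1, 0, 0; 0, 0, 1, -1; 0, 0, -1, 1], !![2, 0, 1, 1; 0, 2, 1, 1; -1, -1, -2, 0; -1, -1, 0, -2], !![1, 1, 1, 1; -1, -1, -1, -1; 0, 0, 0, 0; 0, 0, 0, 0], !![0, 0, 0, 0; 0, 0, 0, 0; 1, 1, 1, 1; -1, -1, -1, -1], !![-1, -1, 1, 1; 1, 1, -1, -1; 0, 0, 0, 0; 0, 0, 0, 0], !![0, 0, 0, 0; 0, 0, 0, 0; 1, 1, -1, -1; -1, -1, 1, 1], !![-1, 1, 0, 0; -1, 1, 0, 0; 1, -1, 0, 0; 1, -1, 0, 0], !![0, 0, 1, -1; 0, 0, 1, -1; 0, 0, -1, 1; 0, 0, -1, 1]]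 : Fin 12 → Matrix (Fin 4) (Fin 4) ℂ) 2 = !![0, 0, 1, -1; 0, 0, -1, 1; 1, -1, 0, 0; -1, 1, 0, 0] from rfl] at h
  rw [show (![!![-1, 1, 0, 0; 1, -1, 0, 0; 0, 0, -1, 1; 0, 0, 1, -1], !![-2, 0, 1, 1; 0, -2, 1, 1; 1, 1, -2, 0; 1, 1, 0, -2], !![0, 0, 1, -1; 0, 0, -1, 1; 1, -1, 0, 0; -1, 1, 0, 0], !![0, 0, -1, 1; 0, 0, 1, -1; 1, -1, 0, 0; -1, 1, 0, 0], !![-1, 1, 0, 0; 1, -1, 0, 0; 0, 0, 1, -1; 0, 0, -1, 1], !![2, 0, 1, 1; 0, 2, 1, 1; -1, -1, -2, 0; -1, -1, 0, -2], !![1, 1, 1, 1; -1, -1, -1, -1; 0, 0, 0, 0; 0, 0, 0, 0], !![0, 0, 0, 0; 0, 0, 0, 0; 1, 1, 1, 1; -1, -1, -1, -1], !![-1, -1, 1, 1; 1, 1, -1, -1; 0, 0, 0, 0; 0, 0, 0, 0], !![0, 0, 0, 0; 0, 0, 0, 0; 1, 1, -1, -1; -1, -1, 1, 1], !![-1, 1,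 0, 0; -1, 1, 0, 0; 1, -1, 0, 0; 1, -1, 0, 0], !![0, 0, 1, -1; 0, 0, 1, -1; 0, 0, -1, 1; 0, 0, -1, 1]] : Fin 12 → Matrix (Fin 4) (Fin 4) ℂ) 3 = !![0, 0, -1, 1; 0, 0, 1, -1; 1, -1, 0, 0; -1, 1, 0, 0] from rfl] at h
  rw [show (![!![-1, 1, 0, 0; 1, -1, 0, 0; 0, 0, -1, 1; 0, 0, 1, -1], !![-2, 0, 1, 1; 0, -2, 1, 1; 1, 1, -2, 0; 1, 1, 0, -2], !![0, 0, 1, -1; 0, 0, -1, 1; 1, -1, 0, 0; -1, 1, 0, 0], !![0, 0, -1, 1; 0, 0, 1, -1; 1, -1, 0, 0; -1, 1, 0, 0], !![-1, 1, 0, 0; 1, -1, 0, 0; 0, 0, 1, -1; 0, 0, -1, 1], !![2, 0, 1, 1; 0, 2, 1, 1; -1, -1, -2, 0; -1, -1, 0, -2], !![1, 1, 1, 1; -1, -1, -1, -1; 0, 0, 0, 0; 0, 0, 0, 0], !![0, 0, 0, 0; 0, 0, 0, 0; 1, 1, 1, 1; -1, -1, -1, -1], !![-1, -1, 1, 1;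 1, 1, -1, -1; 0, 0, 0, 0; 0, 0, 0, 0], !![0, 0, 0, 0; 0, 0, 0, 0; 1, 1, -1, -1; -1, -1, 1, 1], !![-1, 1, 0, 0; -1, 1, 0, 0; 1, -1, 0, 0; 1, -1, 0, 0], !![0, 0, 1, -1; 0, 0, 1, -1; 0, 0, -1, 1; 0, 0, -1, 1]] : Fin 12 → Matrix (Fin 4) (Fin 4) ℂ) 4 = !![-1, 1, 0, 0; 1, -1, 0, 0; 0, 0, 1, -1; 0, 0, -1, 1] from rfl] at h
  rw [show (![!![-1, 1, 0, 0; 1, -1, 0, 0; 0, 0, -1, 1; 0, 0, 1, -1], !![-2, 0, 1, 1; 0, -2, 1, 1; 1, 1, -2, 0; 1, 1, 0, -2], !![0, 0, 1, -1; 0, 0, -1, 1; 1, -1, 0, 0; -1, 1, 0, 0], !![0, 0, -1, 1; 0, 0, 1, -1; 1, -1, 0, 0; -1, 1, 0, 0], !![-1, 1, 0, 0; 1, -1, 0, 0; 0, 0, 1, -1; 0, 0, -1, 1], !![2, 0, 1, 1; 0, 2, 1, 1; -1, -1, -2, 0; -1, -1, 0, -2], !![1, 1, 1, 1; -1, -1,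 -1, -1; 0, 0, 0, 0; 0, 0, 0, 0], !![0, 0, 0, 0; 0, 0, 0, 0; 1, 1, 1, 1; -1, -1, -1, -1], !![-1, -1, 1, 1; 1, 1, -1, -1; 0, 0, 0, 0; 0, 0, 0, 0], !![0, 0, 0, 0; 0, 0, 0, 0; 1, 1, -1, -1; -1, -1, 1, 1], !![-1, 1, 0, 0; -1, 1, 0, 0; 1, -1, 0, 0; 1, -1, 0, 0], !![0, 0, 1, -1; 0, 0, 1, -1; 0, 0, -1, 1; 0, 0, -1, 1]] : Fin 12 → Matrix (Fin 4) (Fin 4) ℂ) 5 = !![2, 0, 1, 1; 0, 2, 1, 1; -1, -1, -2, 0; -1, -1, 0, -2] from rfl] at h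
  rw [show (![!![-1, 1, 0, 0; 1, -1, 0, 0; 0, 0, -1, 1; 0, 0, 1, -1], !![-2, 0, 1, 1; 0, -2, 1, 1; 1, 1, -2, 0; 1, 1, 0, -2], !![0, 0, 1, -1; 0, 0, -1, 1; 1, -1, 0, 0; -1, 1, 0, 0], !![0, 0, -1, 1; 0, 0, 1, -1; 1, -1, 0, 0; -1, 1, 0, 0], !![-1, 1, 0, 0; 1, -1, 0, 0; 0, 0, 1, -1; 0, 0, -1, 1], !![2, 0, 1, 1; 0, 2, 1, 1; -1, -1, -2, 0; -1, -1, 0, -2], !![1, 1, 1, 1; -1, -1, -1, -1; 0, 0, 0, 0; 0, 0, 0, 0], !![0, 0, 0, 0; 0, 0, 0, 0; 1, 1, 1, 1; -1, -1, -1, -1], !![-1, -1, 1, 1; 1, 1, -1, -1; 0, 0, 0, 0; 0, 0, 0, 0], !![0, 0, 0, 0; 0, 0, 0, 0; 1, 1, -1, -1; -1, -1, 1, 1], !![-1, 1, 0, 0; -1, 1, 0, 0; 1, -1, 0, 0; 1, -1, 0, 0], !![0, 0, 1, -1; 0, 0, 1, -1; 0, 0, -1, 1; 0, 0, -1, 1]]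 : Fin 12 → Matrix (Fin 4) (Fin 4) ℂ) 6 = !![1, 1, 1, 1; -1, -1, -1, -1; 0, 0, 0, 0; 0, 0, 0, 0] from rfl] at h
  rw [show (![!![-1, 1, 0, 0; 1, -1, 0, 0; 0, 0, -1, 1; 0, 0, 1, -1], !![-2, 0, 1, 1; 0, -2, 1, 1; 1, 1, -2, 0; 1, 1, 0, -2], !![0, 0, 1, -1; 0, 0, -1, 1; 1, -1, 0, 0; -1, 1, 0, 0], !![0, 0, -1, 1; 0, 0, 1, -1; 1, -1, 0, 0; -1, 1, 0, 0], !![-1, 1, 0, 0; 1, -1, 0, 0; 0, 0, 1, -1; 0, 0, -1, 1], !![2, 0, 1, 1; 0, 2, 1, 1; -1, -1, -2, 0; -1, -1, 0, -2], !![1, 1, 1, 1; -1, -1, -1, -1; 0, 0, 0, 0; 0, 0, 0, 0], !![0, 0, 0, 0; 0, 0, 0, 0; 1, 1, 1, 1; -1, -1, -1, -1], !![-1, -1, 1, 1; 1, 1, -1, -1; 0, 0, 0, 0; 0, 0, 0, 0], !![0, 0, 0, 0; 0, 0, 0, 0; 1, 1, -1, -1; -1, -1, 1, 1], !![-1, 1,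 0, 0; -1, 1, 0, 0; 1, -1, 0, 0; 1, -1, 0, 0], !![0, 0, 1, -1; 0, 0, 1, -1; 0, 0, -1, 1; 0, 0, -1, 1]] : Fin 12 → Matrix (Fin 4) (Fin 4) ℂ) 7 = !![0, 0, 0, 0; 0, 0, 0, 0; 1, 1, 1, 1; -1, -1, -1, -1] from rfl] at h
  rw [show (![!![-1, 1, 0, 0; 1, -1, 0, 0; 0, 0, -1, 1; 0, 0, 1, -1], !![-2, 0, 1, 1; 0, -2, 1, 1; 1, 1, -2, 0; 1, 1, 0, -2], !![0, 0, 1, -1; 0, 0, -1, 1; 1, -1, 0, 0; -1, 1, 0, 0], !![0, 0, -1, 1; 0, 0, 1, -1; 1, -1, 0, 0; -1, 1, 0, 0], !![-1, 1, 0, 0; 1, -1, 0, 0; 0, 0, 1, -1; 0, 0, -1, 1], !![2, 0, 1, 1; 0, 2, 1, 1; -1, -1, -2, 0; -1, -1, 0, -2], !![1, 1, 1, 1; -1, -1, -1, -1; 0, 0, 0, 0; 0, 0, 0, 0], !![0, 0, 0, 0; 0, 0, 0, 0; 1, 1, 1, 1; -1, -1, -1, -1], !![-1, -1, 1, 1;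 1, 1, -1, -1; 0, 0, 0, 0; 0, 0, 0, 0], !![0, 0, 0, 0; 0, 0, 0, 0; 1, 1, -1, -1; -1, -1, 1, 1], !![-1, 1, 0, 0; -1, 1, 0, 0; 1, -1, 0, 0; 1, -1, 0, 0], !![0, 0, 1, -1; 0, 0, 1, -1; 0, 0, -1, 1; 0, 0, -1, 1]] : Fin 12 → Matrix (Fin 4) (Fin 4) ℂ) 8 = !![-1, -1, 1, 1; 1, 1, -1, -1; 0, 0, 0, 0; 0, 0, 0, 0] from rfl] at h
  rw [show (![!![-1, 1, 0, 0; 1, -1, 0, 0; 0, 0, -1, 1; 0, 0, 1, -1], !![-2, 0, 1, 1; 0, -2, 1, 1; 1, 1, -2, 0; 1, 1, 0, -2], !![0, 0, 1, -1; 0, 0, -1, 1; 1, -1, 0, 0; -1, 1, 0, 0], !![0, 0, -1, 1; 0, 0, 1, -1; 1, -1, 0, 0; -1, 1, 0, 0], !![-1, 1, 0, 0; 1, -1, 0, 0; 0, 0, 1, -1; 0, 0, -1, 1], !![2, 0, 1, 1; 0, 2, 1, 1; -1, -1, -2, 0; -1, -1, 0, -2], !![1, 1, 1, 1; -1, -1,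 -1, -1; 0, 0, 0, 0; 0, 0, 0, 0], !![0, 0, 0, 0; 0, 0, 0, 0; 1, 1, 1, 1; -1, -1, -1, -1], !![-1, -1, 1, 1; 1, 1, -1, -1; 0, 0, 0, 0; 0, 0, 0, 0], !![0, 0, 0, 0; 0, 0, 0, 0; 1, 1, -1, -1; -1, -1, 1, 1], !![-1, 1, 0, 0; -1, 1, 0, 0; 1, -1, 0, 0; 1, -1, 0, 0], !![0, 0, 1, -1; 0, 0, 1, -1; 0, 0, -1, 1; 0, 0, -1, 1]] : Fin 12 → Matrix (Fin 4) (Fin 4) ℂ) 9 = !![0, 0, 0, 0; 0, 0, 0, 0; 1, 1, -1, -1; -1, -1, 1, 1] from rfl] at h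
  rw [show (![!![-1, 1, 0, 0; 1, -1, 0, 0; 0, 0, -1, 1; 0, 0, 1, -1], !![-2, 0, 1, 1; 0, -2, 1, 1; 1, 1, -2, 0; 1, 1, 0, -2], !![0, 0, 1, -1; 0, 0, -1, 1; 1, -1, 0, 0; -1, 1, 0, 0], !![0, 0, -1, 1; 0, 0, 1, -1; 1, -1, 0, 0; -1, 1, 0, 0], !![-1, 1, 0, 0; 1, -1, 0, 0; 0, 0, 1, -1; 0, 0, -1, 1], !![2, 0, 1, 1; 0, 2, 1, 1; -1, -1, -2, 0; -1, -1, 0, -2], !![1, 1, 1, 1; -1, -1, -1, -1; 0, 0, 0, 0; 0, 0, 0, 0], !![0, 0, 0, 0; 0, 0, 0, 0; 1, 1, 1, 1; -1, -1, -1, -1], !![-1, -1, 1, 1; 1, 1, -1, -1; 0, 0, 0, 0; 0, 0, 0, 0], !![0, 0, 0, 0; 0, 0, 0, 0; 1, 1, -1, -1; -1, -1, 1, 1], !![-1, 1, 0, 0; -1, 1, 0, 0; 1, -1, 0, 0; 1, -1, 0, 0], !![0, 0, 1, -1; 0, 0, 1, -1; 0, 0, -1, 1; 0, 0, -1, 1]]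 : Fin 12 → Matrix (Fin 4) (Fin 4) ℂ) 10 = !![-1, 1, 0, 0; -1, 1, 0, 0; 1, -1, 0, 0; 1, -1, 0, 0] from rfl] at h
  rw [show (![!![-1, 1, 0, 0; 1, -1, 0, 0; 0, 0, -1, 1; 0, 0, 1, -1], !![-2, 0, 1, 1; 0, -2, 1, 1; 1, 1, -2, 0; 1, 1, 0, -2], !![0, 0, 1, -1; 0, 0, -1, 1; 1, -1, 0, 0; -1, 1, 0, 0], !![0, 0, -1, 1; 0, 0, 1, -1; 1, -1, 0, 0; -1, 1, 0, 0], !![-1, 1, 0, 0; 1, -1, 0, 0; 0, 0, 1, -1; 0, 0, -1, 1], !![2, 0, 1, 1; 0, 2, 1, 1; -1, -1, -2, 0; -1, -1, 0, -2], !![1, 1, 1, 1; -1, -1, -1, -1; 0, 0, 0, 0; 0, 0, 0, 0], !![0, 0, 0, 0; 0, 0, 0, 0; 1, 1, 1, 1; -1, -1, -1, -1], !![-1, -1, 1, 1; 1, 1, -1, -1; 0, 0, 0, 0; 0, 0, 0, 0], !![0, 0, 0, 0; 0, 0, 0, 0; 1, 1, -1, -1; -1, -1, 1, 1], !![-1,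 1, 0, 0; -1, 1, 0, 0; 1, -1, 0, 0; 1, -1, 0, 0], !![0, 0, 1, -1; 0, 0, 1, -1; 0, 0, -1, 1; 0, 0, -1, 1]] : Fin 12 → Matrix (Fin 4) (Fin 4) ℂ) 11 = !![0, 0, 1, -1; 0, 0, 1, -1; 0, 0, -1, 1; 0, 0, -1, 1] from rfl] at h
  have q01 := congrFun (congrFun h 0) 1
  have q02 := congrFun (congrFun h 0) 2
  have q03 := congrFun (congrFun h 0) 3
  have q10 := congrFun (congrFun h 1) 0
  have q12 := congrFun (congrFun h 1) 2
  have q13 := congrFun (congrFun h 1) 3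
  have q20 := congrFun (congrFun h 2) 0
  have q21 := congrFun (congrFun h 2) 1
  have q23 := congrFun (congrFun h 2) 3
  have q30 := congrFun (congrFun h 3) 0
  have q31 := congrFun (congrFun h 3) 1
  have q32 := congrFun (congrFun h 3) 2
  simp [Matrix.add_apply, Matrix.smul_apply, Matrix.vecHead, Matrix.vecTail] at q01 q02 q03 q10 q12 q13 q20 q21 q23 q30 q31 q32
  have z0 : g 0 = 0 := by linear_combination (1/4) * q01 + (1/4) * q10 + (1/4) * q23 + (1/4) * q32
  have z1 : g 1 = 0 := by linear_combination (1/8) * q02 + (1/8) * q03 + (1/8) * q12 + (1/8) * q13 + (1/8) * q20 + (1/8) * q21 + (1/8) * q30 + (1/8) * q31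
  have z2 : g 2 = 0 := by linear_combination (1/8) * q02 + (-1/8) * q03 + (-1/8) * q12 + (1/8) * q13 + (1/8) * q20 + (-1/8) * q21 + (-1/8) * q30 + (1/8) * q31
  have z3 : g 3 = 0 := by linear_combination (-1/8) * q02 + (1/8) * q03 + (1/8) * q12 + (-1/8) * q13 + (1/8) * q20 + (-1/8) * q21 + (-1/8) * q30 + (1/8) * q31
  have z4 : g 4 = 0 := by linear_combination (1/4) * q01 + (1/4) * q10 + (-1/4) * q23 + (-1/4) * q32
  have z5 : g 5 = 0 := by linear_combination (1/8) * q02 + (1/8) * q03 + (1/8) * q12 + (1/8) * q13 + (-1/8) * q20 + (-1/8) * q21 + (-1/8) * q30 + (-1/8) * q31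
  have z6 : g 6 = 0 := by linear_combination (1/4) * q01 + (1/8) * q02 + (1/8) * q03 + (-1/4) * q10 + (-1/8) * q12 + (-1/8) * q13 + (-1/8) * q20 + (1/8) * q21 + (-1/8) * q30 + (1/8) * q31
  have z7 : g 7 = 0 := by linear_combination (-1/8) * q02 + (1/8) * q03 + (-1/8) * q12 + (1/8) * q13 + (1/8) * q20 + (1/8) * q21 + (1/4) * q23 + (-1/8) * q30 + (-1/8) * q31 + (-1/4) * q32
  have z8 : g 8 = 0 := by linear_combination (-1/4) * q01 + (1/8) * q02 + (1/8) * q03 + (1/4) * q10 + (-1/8) * q12 + (-1/8) * q13 + (1/8) * q20 + (-1/8) * q21 + (1/8) * q30 + (-1/8) * q31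
  have z9 : g 9 = 0 := by linear_combination (1/8) * q02 + (-1/8) * q03 + (1/8) * q12 + (-1/8) * q13 + (1/8) * q20 + (1/8) * q21 + (-1/4) * q23 + (-1/8) * q30 + (-1/8) * q31 + (1/4) * q32
  have z10 : g 10 = 0 := by linear_combination (1/4) * q20 + (-1/4) * q21 + (1/4) * q30 + (-1/4) * q31
  have z11 : g 11 = 0 := by linear_combination (1/4) * q02 + (-1/4) * q03 + (1/4) * q12 + (-1/4) * q13
  intro k
  fin_cases k <;> assumption

def colSum : Matrix (Fin 4) (Fin 4) ℂ →ₗ[ℂ] (Fin 4 → ℂ) where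
  toFun Q := fun j => ∑ i, Q i j
  map_add' a b := by
    funext j
    simp [Finset.sum_add_distrib]
  map_smul' c a := by
    funext j
    simp [Finset.mul_sum]

lemma LGM_eq_ker : LGMsub = LinearMap.ker colSum := by
  ext Q
  constructor
  · intro hQ
    rw [LinearMap.mem_ker]
    funext j
    exact hQ j
  · intro hQ j
    exact congrFun (LinearMap.mem_ker.mp hQ) j

lemma colSum_surj : Function.Surjective colSum := by
  intro v
  refine ⟨Matrix.of fun i j => if i = 0 then v j else 0, ?_⟩
  funext j
  simp only [colSum, LinearMap.coe_mk, AddHom.coe_mk, Matrix.of_apply]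
  rw [Fin.sum_univ_four]
  norm_num [show ((2:Fin 4) = 0) = False from eq_false (by decide),
    show ((3:Fin 4) = 0) = False from eq_false (by decide),
    show ((1:Fin 4) = 0) = False from eq_false (by decide)]

lemma finrank_LGM : Module.finrank ℂ LGMsub = 12 := by
  rw [LGM_eq_ker]
  have h := LinearMap.finrank_range_add_finrank_ker colSum
  rw [LinearMap.range_eq_top.2 colSum_surj, finrank_top] at h
  simp only [Module.finrank_fintype_fun_eq_card, Module.finrank_matrix,
    Module.finrank_self, Fintype.card_fin] at h
  omega

lemma spaneq : Submodule.span ℂ (Set.range ![Bid1, Bid2, Bsgn, Bzeta1, Bzeta2_1, Bzeta2_2, Bxi1, Bxi2, Bxi3, Bxi4, Bxi5, Bxi6]) = LGMsub := by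
  apply Submodule.eq_of_le_of_finrank_eq
  · rw [Submodule.span_le]
    rintro x ⟨k, rfl⟩
    fin_cases k
    · exact Bid1_mem
    · exact Bid2_mem
    · exact Bsgn_mem
    · exact Bzeta1_mem
    · exact Bzeta2_1_mem
    · exact Bzeta2_2_mem
    · exact Bxi1_mem
    · exact Bxi2_mem
    · exact Bxi3_mem
    · exact Bxi4_mem
    · exact Bxi5_mem
    · exact Bxi6_mem
  · rw [finrank_span_eq_card indep, finrank_LGM, Fintype.card_fin]

theorem twelve_matrices_form_basis :
    LinearIndependent ℂ
      ![Bid1, Bid2, Bsgn, Bzeta1, Bzeta2_1, Bzeta2_2, Bxi1, Bxi2, Bxi3, Bxi4, Bxi5, Bxi6] ∧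
    Submodule.span ℂ
      (Set.range
        ![Bid1, Bid2, Bsgn, Bzeta1, Bzeta2_1, Bzeta2_2, Bxi1, Bxi2, Bxi3, Bxi4, Bxi5, Bxi6]) =
      LGMsub := by
  exact ⟨indep, spaneq⟩
end
end

section
/- Let L be a 4×4 matrix. Then L belongs to 𝔏_GM⁺ (i.e. L is a rate matrix whose off-diagonal entries are real and nonnegative) and satisfies K_σ L K_σ⁻¹ = L for every σ ∈ 𝒢 if and only if there exist real numbers a, b ≥ 0 such that L = a·B^id₁ + b·B^id₂, where B^id₁ = P_(12)(34) and B^id₂ = P_(13)(24) + P_(14)(23). (Hence the one-dimensional Lie Markov models with 𝒢 symmetry form the continuum spanned by the matrices a·B^id₁ + b·B^id₂ with a, b ≥ 0.) -/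
open Matrix

noncomputable section

/-- `𝔏_GM⁺`: nonnegative real linear combinations of the elementary rate matrices. -/
def LGMplus : Set (Matrix (Fin 4) (Fin 4) ℂ) :=
  {Q | ∃ α : Fin 4 → Fin 4 → ℝ, (∀ i j, 0 ≤ α i j) ∧
    Q = ∑ i, ∑ j, if i = j then 0 else (α i j : ℂ) • Lmat i j}

/- ### auxiliary lemmas -/

lemma Kmat_mul' (σ : Equiv.Perm (Fin 4)) (M : Matrix (Fin 4) (Fin 4) ℂ) :
    Kmat σ * M = M.submatrix σ.symm id := by
  ext i j
  simp only [Matrix.mul_apply, Kmat, Matrix.of_apply, Matrix.submatrix_apply, id]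
  rw [Finset.sum_eq_single (σ.symm i)]
  · simp
  · intro k _ hk
    rw [if_neg, zero_mul]
    intro h; exact hk (by simp [h])
  · simp

lemma mul_Kmat' (M : Matrix (Fin 4) (Fin 4) ℂ) (σ : Equiv.Perm (Fin 4)) :
    M * Kmat σ = M.submatrix id σ := by
  ext i j
  simp only [Matrix.mul_apply, Kmat, Matrix.of_apply, Matrix.submatrix_apply, id]
  rw [Finset.sum_eq_single (σ j)] <;> simp +contextual [eq_comm]

lemma Kmat_inv' (σ : Equiv.Perm (Fin 4)) : (Kmat σ)⁻¹ = Kmat σ.symm := by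
  apply Matrix.inv_eq_right_inv
  rw [mul_Kmat']
  ext i j
  simp [Kmat, Equiv.eq_symm_apply, Matrix.one_apply, eq_comm]

lemma conj_iff' (σ : Equiv.Perm (Fin 4)) (L : Matrix (Fin 4) (Fin 4) ℂ) :
    Kmat σ * L * (Kmat σ)⁻¹ = L ↔ ∀ i j, L (σ i) (σ j) = L i j := by
  rw [Kmat_inv', Kmat_mul', mul_Kmat']
  constructor
  · intro h i j
    have := congrFun (congrFun h (σ i)) (σ j)
    simpa using this.symm
  · intro h
    ext i j
    simpa using (h (σ.symm i) (σ.symm j)).symm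

lemma Lmat_apply' (p q i j : Fin 4) :
    Lmat p q i j = (if p = i ∧ q = j then 1 else 0) - (if q = i ∧ q = j then 1 else 0) := by
  simp [Lmat, Matrix.single]

set_option maxHeartbeats 1000000 in
lemma sum_apply_entry' (α : Fin 4 → Fin 4 → ℝ) (i j : Fin 4) :
    (∑ p, ∑ q, if p = q then (0 : Matrix (Fin 4) (Fin 4) ℂ) else (α p q : ℂ) • Lmat p q) i j =
      if i = j then (α j j : ℂ) - ((α 0 j : ℂ) + α 1 j + α 2 j + α 3 j) else (α i j : ℂ) := by
  have key : ∀ p q : Fin 4, (if p = q then (0 : Matrix (Fin 4) (Fin 4) ℂ) else (α p q : ℂ) • Lmat p q)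
      = (if p = q then (0:ℂ) else (α p q : ℂ)) • Lmat p q := by
    intro p q; split <;> simp
  simp only [key, Matrix.sum_apply, Matrix.smul_apply, Lmat_apply', smul_eq_mul]
  have hc : ∀ k : Fin 4, k = 0 ∨ k = 1 ∨ k = 2 ∨ k = 3 := by decide
  rcases hc i with rfl | rfl | rfl | rfl <;> rcases hc j with rfl | rfl | rfl | rfl <;>
    norm_num (config := { decide := true }) [Fin.sum_univ_four] <;> ring

set_option maxHeartbeats 4000000 in
theorem one_dimensional_G_invariant_stochastic_rate_matrices
    (L : Matrix (Fin 4) (Fin 4) ℂ) :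
    (L ∈ LGMplus ∧ ∀ σ ∈ Glist, Kmat σ * L * (Kmat σ)⁻¹ = L) ↔
      ∃ a b : ℝ, 0 ≤ a ∧ 0 ≤ b ∧ L = (a : ℂ) • Bid1 + (b : ℂ) • Bid2 := by
  have hc : ∀ k : Fin 4, k = 0 ∨ k = 1 ∨ k = 2 ∨ k = 3 := by decide
  constructor
  · rintro ⟨⟨α, hα, hL⟩, hinv⟩
    have hE : ∀ i j, L i j =
        if i = j then (α j j : ℂ) - ((α 0 j : ℂ) + α 1 j + α 2 j + α 3 j) else (α i j : ℂ) :=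
      fun i j => by rw [hL]; exact sum_apply_entry' α i j
    have hv : ∀ i j, i ≠ j → L i j = (α i j : ℂ) := fun i j h => by rw [hE i j, if_neg h]
    -- symmetries
    have s1 : ∀ i j : Fin 4, L (![1,0,2,3] i) (![1,0,2,3] j) = L i j := by
      have h := (conj_iff' _ L).1 (hinv (Equiv.swap 0 1) (by simp [Glist]))
      intro i j
      have e : ∀ k : Fin 4, (Equiv.swap 0 1 : Equiv.Perm (Fin 4)) k = ![1,0,2,3] k := by decide
      rw [← e, ← e]; exact h i j
    have s2 : ∀ i j : Fin 4, L (![0,1,3,2] i) (![0,1,3,2] j) = L i j := by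
      have h := (conj_iff' _ L).1 (hinv (Equiv.swap 2 3) (by simp [Glist]))
      intro i j
      have e : ∀ k : Fin 4, (Equiv.swap 2 3 : Equiv.Perm (Fin 4)) k = ![0,1,3,2] k := by decide
      rw [← e, ← e]; exact h i j
    have s4 : ∀ i j : Fin 4, L (![2,3,0,1] i) (![2,3,0,1] j) = L i j := by
      have h := (conj_iff' _ L).1
        (hinv (Equiv.swap 0 2 * Equiv.swap 1 3) (by simp [Glist]))
      intro i j
      have e : ∀ k : Fin 4, (Equiv.swap 0 2 * Equiv.swap 1 3 : Equiv.Perm (Fin 4)) k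
          = ![2,3,0,1] k := by decide
      rw [← e, ← e]; exact h i j
    -- entry values
    have v10 : L 1 0 = (α 1 0 : ℂ) := hv 1 0 (by decide)
    have v20 : L 2 0 = (α 2 0 : ℂ) := hv 2 0 (by decide)
    have v01 : L 0 1 = (α 1 0 : ℂ) := (s1 0 1).symm.trans v10
    have v23 : L 2 3 = (α 1 0 : ℂ) := (s4 2 3).symm.trans v01
    have v32 : L 3 2 = (α 1 0 : ℂ) := (s2 2 3).trans v23
    have v30 : L 3 0 = (α 2 0 : ℂ) := (s2 2 0).trans v20
    have v21 : L 2 1 = (α 2 0 : ℂ) := (s1 2 0).trans v20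
    have v31 : L 3 1 = (α 2 0 : ℂ) := (s1 3 0).trans v30
    have v02 : L 0 2 = (α 2 0 : ℂ) := (s4 0 2).symm.trans v20
    have v03 : L 0 3 = (α 2 0 : ℂ) := (s2 0 2).trans v02
    have v12 : L 1 2 = (α 2 0 : ℂ) := (s1 0 2).trans v02
    have v13 : L 1 3 = (α 2 0 : ℂ) := (s1 0 3).trans v03
    -- α values (as complex numbers)
    have w01 : (α 0 1 : ℂ) = (α 1 0 : ℂ) := (hv 0 1 (by decide)).symm.trans v01
    have w23 : (α 2 3 : ℂ) = (α 1 0 : ℂ) := (hv 2 3 (by decide)).symm.trans v23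
    have w32 : (α 3 2 : ℂ) = (α 1 0 : ℂ) := (hv 3 2 (by decide)).symm.trans v32
    have w30 : (α 3 0 : ℂ) = (α 2 0 : ℂ) := (hv 3 0 (by decide)).symm.trans v30
    have w21 : (α 2 1 : ℂ) = (α 2 0 : ℂ) := (hv 2 1 (by decide)).symm.trans v21
    have w31 : (α 3 1 : ℂ) = (α 2 0 : ℂ) := (hv 3 1 (by decide)).symm.trans v31
    have w02 : (α 0 2 : ℂ) = (α 2 0 : ℂ) := (hv 0 2 (by decide)).symm.trans v02
    have w03 : (α 0 3 : ℂ) = (α 2 0 : ℂ) := (hv 0 3 (by decide)).symm.trans v03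
    have w12 : (α 1 2 : ℂ) = (α 2 0 : ℂ) := (hv 1 2 (by decide)).symm.trans v12
    have w13 : (α 1 3 : ℂ) = (α 2 0 : ℂ) := (hv 1 3 (by decide)).symm.trans v13
    have r01 : α 0 1 = α 1 0 := by exact_mod_cast w01
    have r23 : α 2 3 = α 1 0 := by exact_mod_cast w23
    have r32 : α 3 2 = α 1 0 := by exact_mod_cast w32
    have r30 : α 3 0 = α 2 0 := by exact_mod_cast w30
    have r21 : α 2 1 = α 2 0 := by exact_mod_cast w21
    have r31 : α 3 1 = α 2 0 := by exact_mod_cast w31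
    have r02 : α 0 2 = α 2 0 := by exact_mod_cast w02
    have r03 : α 0 3 = α 2 0 := by exact_mod_cast w03
    have r12 : α 1 2 = α 2 0 := by exact_mod_cast w12
    have r13 : α 1 3 = α 2 0 := by exact_mod_cast w13
    refine ⟨α 1 0, α 2 0, hα 1 0, hα 2 0, ?_⟩
    ext i j
    rcases hc i with rfl | rfl | rfl | rfl <;> rcases hc j with rfl | rfl | rfl | rfl <;>
      rw [hE] <;>
      norm_num (config := { decide := true }) [Bid1, Bid2, Pmat, Kmat, Matrix.add_apply,
        Matrix.smul_apply, Matrix.sub_apply, Matrix.one_apply, Matrix.of_apply,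
        Equiv.Perm.mul_apply, Equiv.swap_apply_def] <;>
      (try simp only [w01, w23, w32, w30, w21, w31, w02, w03, w12, w13, r01, r23, r32, r30, r21, r31, r02, r03, r12, r13]) <;> (try ring)
  · rintro ⟨a, b, ha, hb, rfl⟩
    constructor
    · refine ⟨fun i j => if i = j then 0 else if ![1,0,3,2] i = j then a else b, ?_, ?_⟩
      · intro i j
        dsimp only
        split_ifs <;> first | exact le_rfl | exact ha | exact hb
      · ext i j
        rw [sum_apply_entry']
        rcases hc i with rfl | rfl | rfl | rfl <;> rcases hc j with rfl | rfl | rfl | rfl <;>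
          norm_num (config := { decide := true }) [Bid1, Bid2, Pmat, Kmat, Matrix.add_apply,
            Matrix.smul_apply, Matrix.sub_apply, Matrix.one_apply, Matrix.of_apply,
            Equiv.Perm.mul_apply, Equiv.swap_apply_def,
            apply_ite (fun x : ℝ => (x : ℂ))] <;> ring
    · intro σ hσ
      rw [conj_iff' σ]
      have hσ' : σ ∈ Glist := hσ
      simp only [Glist, c1324, c1423, List.mem_cons, List.mem_singleton,
        List.not_mem_nil, or_false] at hσ'
      have hrep : ∃ τ : Fin 4 → Fin 4, (∀ k, σ k = τ k) ∧
          (τ = ![0,1,2,3] ∨ τ = ![1,0,2,3] ∨ τ = ![0,1,3,2] ∨ τ = ![1,0,3,2] ∨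
           τ = ![2,3,0,1] ∨ τ = ![3,2,1,0] ∨ τ = ![2,3,1,0] ∨ τ = ![3,2,0,1]) := by
        rcases hσ' with rfl | rfl | rfl | rfl | rfl | rfl | rfl | rfl
        · exact ⟨![0,1,2,3], by decide, by tauto⟩
        · exact ⟨![1,0,2,3], by decide, by tauto⟩
        · exact ⟨![0,1,3,2], by decide, by tauto⟩
        · exact ⟨![1,0,3,2], by decide, by tauto⟩
        · exact ⟨![2,3,0,1], by decide, by tauto⟩
        · exact ⟨![3,2,1,0], by decide, by tauto⟩
        · exact ⟨![2,3,1,0], by decide, by tauto⟩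
        · exact ⟨![3,2,0,1], by decide, by tauto⟩
      obtain ⟨τ, hτ, hlist⟩ := hrep
      intro i j
      rw [hτ, hτ]
      have key : ∀ p q : Fin 4, Bid1 (τ p) (τ q) = Bid1 p q ∧ Bid2 (τ p) (τ q) = Bid2 p q := by
        intro p q
        rcases hlist with rfl | rfl | rfl | rfl | rfl | rfl | rfl | rfl <;>
          rcases hc p with rfl | rfl | rfl | rfl <;> rcases hc q with rfl | rfl | rfl | rfl <;>
          constructor <;>
          norm_num (config := { decide := true }) [Bid1, Bid2, Pmat, Kmat, Matrix.add_apply,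
            Matrix.sub_apply, Matrix.one_apply, Matrix.of_apply,
            Equiv.Perm.mul_apply, Equiv.swap_apply_def]
      simp only [Matrix.add_apply, Matrix.smul_apply, (key i j).1, (key i j).2]
end
end

section
/- The 4×4 matrices P_(12), P_(34), Q₁₂, Q₃₄ satisfy: [P_(12), P_(34)] = 0; [P_(12), Q₁₂] = [P_(12), Q₃₄] = [P_(34), Q₁₂] = [P_(34), Q₃₄] = 0; and [Q₁₂, Q₃₄] = 2(Q₁₂ − Q₃₄) + 2(P_(12) − P_(34)). Consequently these four matrices are linearly independent over ℂ and their complex linear span is a 4-dimensional Lie subalgebra of 𝔏_GM (Model 4.4b). -/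
open Matrix

noncomputable section

lemma P12_eq : Pmat (Equiv.swap 0 1) = !![-1,1,0,0; 1,-1,0,0; 0,0,0,0; 0,0,0,0] := by
  have h0 : (Equiv.swap (0:Fin 4) 1) 0 = 1 := by decide
  have h1 : (Equiv.swap (0:Fin 4) 1) 1 = 0 := by decide
  have h2 : (Equiv.swap (0:Fin 4) 1) 2 = 2 := by decide
  have h3 : (Equiv.swap (0:Fin 4) 1) 3 = 3 := by decide
  ext i j
  fin_cases i <;> fin_cases j <;>
    norm_num [Pmat, Kmat, Matrix.one_apply, h0, h1, h2, h3, Fin.ext_iff] <;>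
    (first | decide | (simp (config := { decide := true }); try ring))

lemma P34_eq : Pmat (Equiv.swap 2 3) = !![0,0,0,0; 0,0,0,0; 0,0,-1,1; 0,0,1,-1] := by
  have h0 : (Equiv.swap (2:Fin 4) 3) 0 = 0 := by decide
  have h1 : (Equiv.swap (2:Fin 4) 3) 1 = 1 := by decide
  have h2 : (Equiv.swap (2:Fin 4) 3) 2 = 3 := by decide
  have h3 : (Equiv.swap (2:Fin 4) 3) 3 = 2 := by decide
  ext i j
  fin_cases i <;> fin_cases j <;>
    norm_num [Pmat, Kmat, Matrix.one_apply, h0, h1, h2, h3, Fin.ext_iff] <;>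
    (first | decide | (simp (config := { decide := true }); try ring))

lemma Q12_eq : Qc12 = !![0,0,1,1; 0,0,1,1; 0,0,-2,0; 0,0,0,-2] := by
  ext i j
  fin_cases i <;> fin_cases j <;>
    norm_num [Qc12, Lmat, Matrix.single, Fin.ext_iff] <;>
    (first | decide | (simp (config := { decide := true }); try ring))

lemma Q34_eq : Qc34 = !![-2,0,0,0; 0,-2,0,0; 1,1,0,0; 1,1,0,0] := by
  ext i j
  fin_cases i <;> fin_cases j <;>
    norm_num [Qc34, Lmat, Matrix.single, Fin.ext_iff] <;>
    (first | decide | (simp (config := { decide := true }); try ring))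

set_option maxHeartbeats 2000000 in
theorem model_4_4b_lie_algebra :
    (Pmat (Equiv.swap 0 1) * Pmat (Equiv.swap 2 3) -
      Pmat (Equiv.swap 2 3) * Pmat (Equiv.swap 0 1) = 0) ∧
    (Pmat (Equiv.swap 0 1) * Qc12 - Qc12 * Pmat (Equiv.swap 0 1) = 0) ∧
    (Pmat (Equiv.swap 0 1) * Qc34 - Qc34 * Pmat (Equiv.swap 0 1) = 0) ∧
    (Pmat (Equiv.swap 2 3) * Qc12 - Qc12 * Pmat (Equiv.swap 2 3) = 0) ∧
    (Pmat (Equiv.swap 2 3) * Qc34 - Qc34 * Pmat (Equiv.swap 2 3) = 0) ∧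
    (Qc12 * Qc34 - Qc34 * Qc12 =
      (2 : ℂ) • (Qc12 - Qc34) + (2 : ℂ) • (Pmat (Equiv.swap 0 1) - Pmat (Equiv.swap 2 3))) ∧
    LinearIndependent ℂ ![Pmat (Equiv.swap 0 1), Pmat (Equiv.swap 2 3), Qc12, Qc34] ∧
    (∀ X ∈ Submodule.span ℂ
        ({Pmat (Equiv.swap 0 1), Pmat (Equiv.swap 2 3), Qc12, Qc34} :
          Set (Matrix (Fin 4) (Fin 4) ℂ)),
      ∀ Y ∈ Submodule.span ℂ
        ({Pmat (Equiv.swap 0 1), Pmat (Equiv.swap 2 3), Qc12, Qc34} :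
          Set (Matrix (Fin 4) (Fin 4) ℂ)),
        X * Y - Y * X ∈ Submodule.span ℂ
          ({Pmat (Equiv.swap 0 1), Pmat (Equiv.swap 2 3), Qc12, Qc34} :
            Set (Matrix (Fin 4) (Fin 4) ℂ))) ∧
    ((Submodule.span ℂ
        ({Pmat (Equiv.swap 0 1), Pmat (Equiv.swap 2 3), Qc12, Qc34} :
          Set (Matrix (Fin 4) (Fin 4) ℂ)) : Set (Matrix (Fin 4) (Fin 4) ℂ)) ⊆ LGMset) := by
  have c1 : Pmat (Equiv.swap 0 1) * Pmat (Equiv.swap 2 3) -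
      Pmat (Equiv.swap 2 3) * Pmat (Equiv.swap 0 1) = 0 := by
    rw [P12_eq, P34_eq]
    ext i j
    fin_cases i <;> fin_cases j <;>
      simp [Matrix.mul_apply, Fin.sum_univ_four] <;> ring
  have c2 : Pmat (Equiv.swap 0 1) * Qc12 - Qc12 * Pmat (Equiv.swap 0 1) = 0 := by
    rw [P12_eq, Q12_eq]
    ext i j
    fin_cases i <;> fin_cases j <;>
      simp [Matrix.mul_apply, Fin.sum_univ_four] <;> ring
  have c3 : Pmat (Equiv.swap 0 1) * Qc34 - Qc34 * Pmat (Equiv.swap 0 1) = 0 := by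
    rw [P12_eq, Q34_eq]
    ext i j
    fin_cases i <;> fin_cases j <;>
      simp [Matrix.mul_apply, Fin.sum_univ_four] <;> ring
  have c4 : Pmat (Equiv.swap 2 3) * Qc12 - Qc12 * Pmat (Equiv.swap 2 3) = 0 := by
    rw [P34_eq, Q12_eq]
    ext i j
    fin_cases i <;> fin_cases j <;>
      simp [Matrix.mul_apply, Fin.sum_univ_four] <;> ring
  have c5 : Pmat (Equiv.swap 2 3) * Qc34 - Qc34 * Pmat (Equiv.swap 2 3) = 0 := by
    rw [P34_eq, Q34_eq]
    ext i j
    fin_cases i <;> fin_cases j <;>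
      simp [Matrix.mul_apply, Fin.sum_univ_four] <;> ring
  have c6 : Qc12 * Qc34 - Qc34 * Qc12 =
      (2 : ℂ) • (Qc12 - Qc34) + (2 : ℂ) • (Pmat (Equiv.swap 0 1) - Pmat (Equiv.swap 2 3)) := by
    have rhs_eq : (2 : ℂ) • ((!![0,0,1,1; 0,0,1,1; 0,0,-2,0; 0,0,0,-2] : Matrix (Fin 4) (Fin 4) ℂ)
          - !![-2,0,0,0; 0,-2,0,0; 1,1,0,0; 1,1,0,0]) +
        (2 : ℂ) • ((!![-1,1,0,0; 1,-1,0,0; 0,0,0,0; 0,0,0,0] : Matrix (Fin 4) (Fin 4) ℂ)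
          - !![0,0,0,0; 0,0,0,0; 0,0,-1,1; 0,0,1,-1]) =
        !![2,2,2,2; 2,2,2,2; -2,-2,-2,-2; -2,-2,-2,-2] := by
      ext i j
      fin_cases i <;> fin_cases j <;> (simp [Matrix.vecHead, Matrix.vecTail]; try ring)
    rw [P12_eq, P34_eq, Q12_eq, Q34_eq, rhs_eq]
    ext i j
    fin_cases i <;> fin_cases j <;>
      (simp [Matrix.mul_apply, Fin.sum_univ_four, Matrix.vecHead, Matrix.vecTail]; try ring)
  refine ⟨c1, c2, c3, c4, c5, c6, ?_, ?_, ?_⟩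
  · -- linear independence
    rw [Fintype.linearIndependent_iff]
    intro g hg
    have e01 := congrFun (congrFun hg 0) 1
    have e23 := congrFun (congrFun hg 2) 3
    have e02 := congrFun (congrFun hg 0) 2
    have e20 := congrFun (congrFun hg 2) 0
    simp [Fin.sum_univ_four, P12_eq, P34_eq, Q12_eq, Q34_eq, Matrix.vecHead,
      Matrix.vecTail] at e01 e23 e02 e20
    intro i
    fin_cases i
    · exact e01
    · exact e23
    · exact e02
    · exact e20
  · -- bracket closure
    set s : Set (Matrix (Fin 4) (Fin 4) ℂ) :=
      {Pmat (Equiv.swap 0 1), Pmat (Equiv.swap 2 3), Qc12, Qc34} with hs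
    have hQ' : Qc34 * Qc12 - Qc12 * Qc34 ∈ Submodule.span ℂ s := by
      have : Qc34 * Qc12 - Qc12 * Qc34 =
          -((2 : ℂ) • (Qc12 - Qc34) + (2 : ℂ) • (Pmat (Equiv.swap 0 1) - Pmat (Equiv.swap 2 3))) := by
        rw [← c6, neg_sub]
      rw [this]
      refine neg_mem (add_mem (Submodule.smul_mem _ _ (sub_mem ?_ ?_)) (Submodule.smul_mem _ _ (sub_mem ?_ ?_))) <;>
        apply Submodule.subset_span <;> simp [hs]
    have hQ : Qc12 * Qc34 - Qc34 * Qc12 ∈ Submodule.span ℂ s := by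
      rw [c6]
      refine add_mem (Submodule.smul_mem _ _ (sub_mem ?_ ?_)) (Submodule.smul_mem _ _ (sub_mem ?_ ?_)) <;>
        apply Submodule.subset_span <;> simp [hs]
    have hgen : ∀ X ∈ s, ∀ Y ∈ s, X * Y - Y * X ∈ Submodule.span ℂ s := by
      intro X hX Y hY
      simp only [hs, Set.mem_insert_iff, Set.mem_singleton_iff] at hX hY
      rcases hX with rfl | rfl | rfl | rfl <;> rcases hY with rfl | rfl | rfl | rfl <;>
        first
          | (simp only [sub_self]; exact zero_mem _)
          | (rw [c1]; exact zero_mem _)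
          | (rw [c2]; exact zero_mem _)
          | (rw [c3]; exact zero_mem _)
          | (rw [c4]; exact zero_mem _)
          | (rw [c5]; exact zero_mem _)
          | (rw [show Pmat (Equiv.swap 2 3) * Pmat (Equiv.swap 0 1) -
                Pmat (Equiv.swap 0 1) * Pmat (Equiv.swap 2 3) = 0 by rw [← neg_sub, c1, neg_zero]];
             exact zero_mem _)
          | (rw [show Qc12 * Pmat (Equiv.swap 0 1) - Pmat (Equiv.swap 0 1) * Qc12 = 0 by
               rw [← neg_sub, c2, neg_zero]]; exact zero_mem _)
          | (rw [show Qc34 * Pmat (Equiv.swap 0 1) - Pmat (Equiv.swap 0 1) * Qc34 = 0 by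
               rw [← neg_sub, c3, neg_zero]]; exact zero_mem _)
          | (rw [show Qc12 * Pmat (Equiv.swap 2 3) - Pmat (Equiv.swap 2 3) * Qc12 = 0 by
               rw [← neg_sub, c4, neg_zero]]; exact zero_mem _)
          | (rw [show Qc34 * Pmat (Equiv.swap 2 3) - Pmat (Equiv.swap 2 3) * Qc34 = 0 by
               rw [← neg_sub, c5, neg_zero]]; exact zero_mem _)
          | exact hQ
          | exact hQ'
    have step1 : ∀ Y ∈ s, ∀ X ∈ Submodule.span ℂ s, X * Y - Y * X ∈ Submodule.span ℂ s := by
      intro Y hY X hX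
      have hle : Submodule.span ℂ s ≤
          (Submodule.span ℂ s).comap (LinearMap.mulRight ℂ Y - LinearMap.mulLeft ℂ Y) := by
        rw [Submodule.span_le]
        intro x hx
        exact Submodule.mem_comap.mpr (hgen x hx Y hY)
      exact Submodule.mem_comap.mp (hle hX)
    intro X hX Y hY
    have hle : Submodule.span ℂ s ≤
        (Submodule.span ℂ s).comap (LinearMap.mulLeft ℂ X - LinearMap.mulRight ℂ X) := by
      rw [Submodule.span_le]
      intro y hy
      have h1 := step1 y (by exact hy) X hX
      exact Submodule.mem_comap.mpr h1
    exact Submodule.mem_comap.mp (hle hY)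
  · -- span ⊆ LGMset
    have hcol : ∀ A ∈ ({Pmat (Equiv.swap 0 1), Pmat (Equiv.swap 2 3), Qc12, Qc34} :
        Set (Matrix (Fin 4) (Fin 4) ℂ)), A ∈ LGMset := by
      intro A hA
      simp only [Set.mem_insert_iff, Set.mem_singleton_iff] at hA
      rcases hA with rfl | rfl | rfl | rfl <;>
        (intro j; rw [Fin.sum_univ_four]) <;>
        fin_cases j <;>
        (simp [P12_eq, P34_eq, Q12_eq, Q34_eq, Matrix.vecHead, Matrix.vecTail]; try ring)
    let M : Submodule ℂ (Matrix (Fin 4) (Fin 4) ℂ) :=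
      { carrier := LGMset
        add_mem' := by
          intro a b ha hb j
          simp only [Matrix.add_apply, Finset.sum_add_distrib, ha j, hb j, add_zero]
        zero_mem' := by intro j; simp [LGMset]
        smul_mem' := by
          intro c a ha j
          simp only [Matrix.smul_apply, smul_eq_mul, ← Finset.mul_sum, ha j, mul_zero] }
    have : Submodule.span ℂ ({Pmat (Equiv.swap 0 1), Pmat (Equiv.swap 2 3), Qc12, Qc34} :
        Set (Matrix (Fin 4) (Fin 4) ℂ)) ≤ M := Submodule.span_le.mpr hcol
    intro x hx
    exact this hx
end
end
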